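/- Define $h(u,y) = 1 + y - u - (y-u)^2$. For every $u \in \mathbb{R}$ and every $z \in \{0,1\}$, the expectation of $h(u,\cdot)$ under the normal distribution $N(u+z, 1)$ is zero: $\int_{\mathbb{R}} \left(1 + y - u - (y-u)^2\right) \frac{1}{\sqrt{2\pi}} e^{-(y-u-z)^2/2}\, dy = 0$. However, $h(u,\cdot)$ is not Lebesgue-almost-everywhere zero. Hence the family $\{N(u+z,1) : z \in \{0,1\}\}$ does not satisfy the completeness condition. -/

import Mathlib

open MeasureTheory Real Filter

lemma integrable_sq_mul_exp : Integrable (fun x : ℝ => x ^ 2 * Real.exp (-x ^ 2 / 2)) := by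
  have hbase : Integrable (fun x : ℝ => Real.exp (-(1/4 : ℝ) * x ^ 2)) :=
    integrable_exp_neg_mul_sq (by norm_num)
  refine Integrable.mono' (hbase.const_mul 4) ?_ ?_
  · exact ((continuous_pow 2).mul (Real.continuous_exp.comp (by continuity))).aestronglyMeasurable
  · filter_upwards with x
    have e1pos : 0 < Real.exp (-(1/4 : ℝ) * x ^ 2) := Real.exp_pos _
    have e2pos : 0 < Real.exp ((1/4 : ℝ) * x ^ 2) := Real.exp_pos _
    have hmul : Real.exp (-(1/4 : ℝ) * x ^ 2) * Real.exp ((1/4 : ℝ) * x ^ 2) = 1 := by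
      rw [← Real.exp_add]; norm_num
    have hx2 : x ^ 2 ≤ 4 * Real.exp ((1/4 : ℝ) * x ^ 2) := by
      have := Real.add_one_le_exp ((1/4 : ℝ) * x ^ 2)
      linarith
    have hsplit : Real.exp (-x ^ 2 / 2) =
        Real.exp (-(1/4 : ℝ) * x ^ 2) * Real.exp (-(1/4 : ℝ) * x ^ 2) := by
      rw [← Real.exp_add]; ring_nf
    rw [hsplit, Real.norm_eq_abs, abs_of_nonneg (by positivity)]
    nlinarith [sq_nonneg x, mul_pos e1pos e2pos]

/-- Integrability of (a + b*x + c*x^2) * exp(-(x-m)^2/2). -/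
lemma integrable_quad_mul_gauss (a b c m : ℝ) :
    Integrable (fun x : ℝ => (a + b * x + c * x ^ 2) * Real.exp (-(x - m) ^ 2 / 2)) := by
  -- first: centered version
  have hcent : ∀ a' b' c' : ℝ,
      Integrable (fun t : ℝ => (a' + b' * t + c' * t ^ 2) * Real.exp (-t ^ 2 / 2)) := by
    intro a' b' c'
    have h0 : Integrable (fun t : ℝ => Real.exp (-(1/2 : ℝ) * t ^ 2)) :=
      integrable_exp_neg_mul_sq (by norm_num)
    have h1 : Integrable (fun t : ℝ => t * Real.exp (-(1/2 : ℝ) * t ^ 2)) :=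
      integrable_mul_exp_neg_mul_sq (by norm_num)
    have h2 := integrable_sq_mul_exp
    have := ((h0.const_mul a').add (h1.const_mul b')).add (h2.const_mul c')
    refine this.congr (Filter.Eventually.of_forall fun t => ?_)
    have e1 : Real.exp (-(1/2 : ℝ) * t ^ 2) = Real.exp (-t ^ 2 / 2) := by ring_nf
    simp only [Pi.add_apply, e1]
    ring
  have := (hcent (a + b * m + c * m ^ 2) (b + 2 * c * m) c).comp_sub_right m
  refine this.congr (Filter.Eventually.of_forall fun x => ?_)
  simp only
  ring

/-- Example 2 (failure of completeness with a binary instrument): the nonzero function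
`h(u,y) = 1 + y - u - (y-u)²` integrates to zero against the `N(u+z,1)` density for
both `z = 0` and `z = 1`, yet `h(u,·)` is not almost everywhere zero. Hence the family
`{N(u+z,1) : z ∈ {0,1}}` is not complete. -/
theorem completeness_fails_binary_instrument
    (h : ℝ → ℝ → ℝ) (hh : ∀ u y, h u y = 1 + y - u - (y - u) ^ 2) :
    (∀ u : ℝ, ∀ z : ℝ, z = 0 ∨ z = 1 →
      ∫ y, h u y *
        ((Real.sqrt (2 * Real.pi))⁻¹ * Real.exp (-(y - u - z) ^ 2 / 2)) = 0) ∧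
    (∀ u : ℝ, ¬ (fun y => h u y) =ᵐ[volume] (fun _ => (0 : ℝ))) := by
  constructor
  · intro u z hz
    have hz2 : z ^ 2 = z := by rcases hz with rfl | rfl <;> norm_num
    -- key: integrand is (√(2π))⁻¹ times the derivative of F
    set F : ℝ → ℝ := fun y => (y - u + z - 1) * Real.exp (-(y - u - z) ^ 2 / 2) with hF
    have hderiv : ∀ y : ℝ, HasDerivAt F
        (h u y * Real.exp (-(y - u - z) ^ 2 / 2)) y := by
      intro y
      have h1 : HasDerivAt (fun y : ℝ => y - u + z - 1) 1 y := by
        simpa using (((hasDerivAt_id y).sub_const u).add_const z).sub_const 1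
      have hinner : HasDerivAt (fun y : ℝ => -(y - u - z) ^ 2 / 2) (-(y - u - z)) y := by
        have : HasDerivAt (fun y : ℝ => y - u - z) 1 y := by
          simpa using ((hasDerivAt_id y).sub_const u).sub_const z
        have := (this.pow 2).neg.div_const 2
        simpa using this.congr_deriv (by ring)
      have h2 : HasDerivAt (fun y : ℝ => Real.exp (-(y - u - z) ^ 2 / 2))
          (Real.exp (-(y - u - z) ^ 2 / 2) * (-(y - u - z))) y := hinner.exp
      have := h1.mul h2
      refine this.congr_deriv ?_
      rw [hh]
      set e := Real.exp (-(y - u - z) ^ 2 / 2) with he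
      linear_combination e * hz2
    have hint : Integrable (fun y => h u y * Real.exp (-(y - u - z) ^ 2 / 2)) := by
      have := integrable_quad_mul_gauss (1 - u - u ^ 2) (1 + 2 * u) (-1) (u + z)
      refine this.congr (Filter.Eventually.of_forall fun y => ?_)
      simp only [hh]
      rw [show -(y - (u + z)) ^ 2 / 2 = -(y - u - z) ^ 2 / 2 by ring]
      ring
    have hintF : Integrable F := by
      have := integrable_quad_mul_gauss (-u + z - 1) 1 0 (u + z)
      refine this.congr (Filter.Eventually.of_forall fun y => ?_)
      simp only [hF]
      rw [show -(y - (u + z)) ^ 2 / 2 = -(y - u - z) ^ 2 / 2 by ring]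
      ring
    have hzero : ∫ y, h u y * Real.exp (-(y - u - z) ^ 2 / 2) = 0 :=
      integral_eq_zero_of_hasDerivAt_of_integrable hderiv hint hintF
    calc ∫ y, h u y * ((Real.sqrt (2 * Real.pi))⁻¹ * Real.exp (-(y - u - z) ^ 2 / 2))
        = ∫ y, (Real.sqrt (2 * Real.pi))⁻¹ * (h u y * Real.exp (-(y - u - z) ^ 2 / 2)) := by
          congr 1; funext y; ring
      _ = (Real.sqrt (2 * Real.pi))⁻¹ * ∫ y, h u y * Real.exp (-(y - u - z) ^ 2 / 2) :=
          integral_const_mul _ _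
      _ = 0 := by rw [hzero, mul_zero]
  · intro u hae
    have h5 : Real.sqrt 5 ^ 2 = 5 := Real.sq_sqrt (by norm_num)
    have hsub : {y : ℝ | h u y = 0} ⊆
        {u + (1 + Real.sqrt 5) / 2, u + (1 - Real.sqrt 5) / 2} := by
      intro y hy
      simp only [Set.mem_setOf_eq, hh] at hy
      have : (y - (u + (1 + Real.sqrt 5) / 2)) * (y - (u + (1 - Real.sqrt 5) / 2)) = 0 := by
        linear_combination -hy - (1/4 : ℝ) * h5
      rcases mul_eq_zero.1 this with h' | h'
      · exact Set.mem_insert_iff.2 (Or.inl (by linarith))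
      · exact Set.mem_insert_iff.2 (Or.inr (Set.mem_singleton_iff.2 (by linarith)))
    have hnull1 : volume {y : ℝ | h u y = 0} = 0 :=
      measure_mono_null hsub
        (((Set.countable_singleton _).insert _).measure_zero _)
    have hnull2 : volume {y : ℝ | h u y ≠ 0} = 0 := by
      have := hae
      rw [Filter.EventuallyEq, ae_iff] at this
      simpa using this
    have : volume (Set.univ : Set ℝ) = 0 := by
      have hcover : (Set.univ : Set ℝ) ⊆ {y : ℝ | h u y = 0} ∪ {y : ℝ | h u y ≠ 0} := by
        intro y _; by_cases hy : h u y = 0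
        · exact Or.inl hy
        · exact Or.inr hy
      refine le_antisymm ?_ zero_le
      calc volume (Set.univ : Set ℝ) ≤ volume ({y : ℝ | h u y = 0} ∪ {y : ℝ | h u y ≠ 0}) :=
            measure_mono hcover
        _ ≤ volume {y : ℝ | h u y = 0} + volume {y : ℝ | h u y ≠ 0} := measure_union_le _ _
        _ = 0 := by rw [hnull1, hnull2, add_zero]
    rw [Real.volume_univ] at this
    exact ENNReal.top_ne_zero this
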